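/- Let A be a nonempty finite set, B a nonempty compact metric space, m ∈ ℕ, and b : A × B → ℝ^m, f : A × B → ℝ functions with b(α,·) and f(α,·) continuous on B for every α ∈ A. Define G : ℝ^m → ℝ by G(u) = max_{α∈A} min_{β∈B} (b(α,β)·u − f(α,β)). Then for every u ∈ ℝ^m and every ε > 0 there exists δ > 0 such that for every s ∈ ℝ^m with 0 < ‖s‖ ≤ δ, every α_s ∈ A satisfying min_{β∈B} (b(α_s,β)·(u+s) − f(α_s,β)) = G(u+s), and every β_s ∈ B minimizing β ↦ b(α_s,β)·(u+s) − f(α_s,β) over B, one has |G(u+s) − G(u) − b(α_s,β_s)·s| ≤ ε‖s‖. (That is, the nonconvex max–min Hamiltonian is semismooth on ℝ^m with generalized gradients b(α_s,β_s) taken at optimizers for the perturbed point.) -/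

import Mathlib

private lemma min_attained' {B : Type*} [MetricSpace B] [CompactSpace B] [Nonempty B]
    (h : B → ℝ) (hc : Continuous h) :
    ∃ β0 : B, (∀ β, h β0 ≤ h β) ∧ (⨅ β, h β) = h β0 := by
  obtain ⟨β0, -, h1⟩ := isCompact_univ.exists_isMinOn Set.univ_nonempty hc.continuousOn
  have h2 : ∀ β, h β0 ≤ h β := fun β => (isMinOn_iff.mp h1) β trivial
  refine ⟨β0, h2, le_antisymm (ciInf_le ⟨h β0, ?_⟩ β0) (le_ciInf h2)⟩
  rintro x ⟨β, rfl⟩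
  exact h2 β

/-- Semismoothness of the nonconvex max–min Hamiltonian
`G(u) = max_{α ∈ A} min_{β ∈ B} (b(α,β)·u - f(α,β))` on `ℝ^m`: for every `u` and
`ε > 0` there is `δ > 0` such that for every `s` with `0 < ‖s‖ ≤ δ` and every pair of
optimizers `(αs, βs)` for the perturbed point `u + s`,
`|G(u+s) - G(u) - b(αs,βs)·s| ≤ ε‖s‖`. -/
theorem stmt11 {m : ℕ} {A : Type*} [Fintype A] [Nonempty A]
    {B : Type*} [MetricSpace B] [CompactSpace B] [Nonempty B]
    (b : A → B → EuclideanSpace ℝ (Fin m)) (f : A → B → ℝ)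
    (hb : ∀ α : A, Continuous (b α)) (hf : ∀ α : A, Continuous (f α))
    (G : EuclideanSpace ℝ (Fin m) → ℝ)
    (hG : ∀ u, G u = ⨆ α : A, ⨅ β : B, ((inner ℝ (b α β) u : ℝ) - f α β)) :
    ∀ (u : EuclideanSpace ℝ (Fin m)), ∀ ε > (0 : ℝ), ∃ δ > (0 : ℝ),
      ∀ s : EuclideanSpace ℝ (Fin m), 0 < ‖s‖ → ‖s‖ ≤ δ →
        ∀ αs : A, (⨅ β : B, ((inner ℝ (b αs β) (u + s) : ℝ) - f αs β)) = G (u + s) →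
          ∀ βs : B,
            (∀ β : B, (inner ℝ (b αs βs) (u + s) : ℝ) - f αs βs ≤
              (inner ℝ (b αs β) (u + s) : ℝ) - f αs β) →
            |G (u + s) - G u - (inner ℝ (b αs βs) s : ℝ)| ≤ ε * ‖s‖ := by
  classical
  intro u ε hε
  -- continuity of the inner objective in β
  have hcont : ∀ (α : A) (v : EuclideanSpace ℝ (Fin m)),
      Continuous fun β : B => ((inner ℝ (b α β) v : ℝ) - f α β) :=
    fun α v => ((hb α).inner continuous_const).sub (hf α)
  -- attained minima
  have hmin : ∀ (α : A) (v : EuclideanSpace ℝ (Fin m)), ∃ β0 : B,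
      (∀ β, (inner ℝ (b α β0) v : ℝ) - f α β0 ≤ (inner ℝ (b α β) v : ℝ) - f α β) ∧
      (⨅ β : B, ((inner ℝ (b α β) v : ℝ) - f α β)) = (inner ℝ (b α β0) v : ℝ) - f α β0 :=
    fun α v => min_attained' _ (hcont α v)
  -- a uniform bound on ‖b α β‖
  obtain ⟨M, hMpos, hM⟩ : ∃ M : ℝ, 0 < M ∧ ∀ α β, ‖b α β‖ ≤ M := by
    have h1 : ∀ α : A, ∃ Mα : ℝ, ∀ β, ‖b α β‖ ≤ Mα := fun α => by
      obtain ⟨β0, -, h1⟩ :=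
        isCompact_univ.exists_isMaxOn Set.univ_nonempty (hb α).norm.continuousOn
      exact ⟨‖b α β0‖, fun β => (isMaxOn_iff.mp h1) β trivial⟩
    choose Mf hMf using h1
    refine ⟨1 + Finset.univ.sup' Finset.univ_nonempty Mf, ?_, fun α β => ?_⟩
    · have h2 : (0:ℝ) ≤ Finset.univ.sup' Finset.univ_nonempty Mf :=
        le_trans (norm_nonneg (b (Classical.arbitrary A) (Classical.arbitrary B)))
          ((hMf _ _).trans (Finset.le_sup' Mf (Finset.mem_univ _)))
      linarith
    · have h3 := (hMf α β).trans (Finset.le_sup' Mf (Finset.mem_univ α))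
      linarith
  -- one-sided Lipschitz estimate for the inner minimum
  have hLip : ∀ (α : A) (v s : EuclideanSpace ℝ (Fin m)),
      (⨅ β : B, ((inner ℝ (b α β) (v + s) : ℝ) - f α β)) ≤
      (⨅ β : B, ((inner ℝ (b α β) v : ℝ) - f α β)) + M * ‖s‖ := by
    intro α v s
    obtain ⟨β0, hβ0, hβ0e⟩ := hmin α v
    obtain ⟨β1, hβ1, hβ1e⟩ := hmin α (v + s)
    rw [hβ0e, hβ1e]
    have h1 : (inner ℝ (b α β1) (v+s) : ℝ) - f α β1 ≤ (inner ℝ (b α β0) (v+s) : ℝ) - f α β0 :=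
      hβ1 β0
    have h2 : (inner ℝ (b α β0) (v+s) : ℝ) = (inner ℝ (b α β0) v : ℝ) + (inner ℝ (b α β0) s : ℝ) :=
      inner_add_right _ _ _
    have h3 : (inner ℝ (b α β0) s : ℝ) ≤ M * ‖s‖ :=
      le_trans (real_inner_le_norm _ _)
        (mul_le_mul_of_nonneg_right (hM α β0) (norm_nonneg s))
    linarith
  -- the supremum over A is attained
  have hsup_att : ∀ (v : EuclideanSpace ℝ (Fin m)), ∃ α : A,
      (∀ α' : A, (⨅ β : B, ((inner ℝ (b α' β) v : ℝ) - f α' β)) ≤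
        (⨅ β : B, ((inner ℝ (b α β) v : ℝ) - f α β))) ∧
      (⨆ α' : A, ⨅ β : B, ((inner ℝ (b α' β) v : ℝ) - f α' β)) =
        (⨅ β : B, ((inner ℝ (b α β) v : ℝ) - f α β)) := by
    intro v
    obtain ⟨α, hα⟩ :=
      Finite.exists_max (fun α : A => ⨅ β : B, ((inner ℝ (b α β) v : ℝ) - f α β))
    exact ⟨α, hα, le_antisymm (ciSup_le hα)
      (le_ciSup (f := fun α' : A => ⨅ β : B, ((inner ℝ (b α' β) v : ℝ) - f α' β))
        (Set.finite_range _).bddAbove α)⟩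
  -- key: minimizers at a nearby point have b-values ε-close to b-values of minimizers at u
  have key : ∀ α : A, ∃ d : ℝ, 0 < d ∧ ∀ s : EuclideanSpace ℝ (Fin m), ‖s‖ ≤ d →
      ∀ β' : B, (∀ β, (inner ℝ (b α β') (u+s) : ℝ) - f α β' ≤ (inner ℝ (b α β) (u+s) : ℝ) - f α β) →
      ∃ β : B, (∀ β2, (inner ℝ (b α β) u : ℝ) - f α β ≤ (inner ℝ (b α β2) u : ℝ) - f α β2) ∧
        ‖b α β' - b α β‖ ≤ ε := by
    intro α
    obtain ⟨β0, hβ0, hβ0e⟩ := hmin α u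
    set K : Set B :=
      {β : B | (inner ℝ (b α β) u : ℝ) - f α β ≤ (inner ℝ (b α β0) u : ℝ) - f α β0} with hK
    have hβ0K : β0 ∈ K := by simp only [hK, Set.mem_setOf_eq]; exact le_refl _
    have hKmin : ∀ β ∈ K, ∀ β2,
        (inner ℝ (b α β) u : ℝ) - f α β ≤ (inner ℝ (b α β2) u : ℝ) - f α β2 :=
      fun β hβ β2 => le_trans hβ (hβ0 β2)
    set J : Set (EuclideanSpace ℝ (Fin m)) := b α '' K with hJ
    have hJne : J.Nonempty := ⟨b α β0, β0, hβ0K, rfl⟩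
    have extract : ∀ β' : B, Metric.infDist (b α β') J < ε →
        ∃ β : B, (∀ β2, (inner ℝ (b α β) u : ℝ) - f α β ≤ (inner ℝ (b α β2) u : ℝ) - f α β2) ∧
          ‖b α β' - b α β‖ ≤ ε := by
      intro β' h
      obtain ⟨y, hyJ, hy⟩ := (Metric.infDist_lt_iff hJne).mp h
      obtain ⟨β, hβK, rfl⟩ := hyJ
      exact ⟨β, hKmin β hβK, by rw [← dist_eq_norm]; exact hy.le⟩
    set S : Set B := {β' : B | ε ≤ Metric.infDist (b α β') J} with hS
    have hSclosed : IsClosed S :=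
      isClosed_le continuous_const ((Metric.continuous_infDist_pt J).comp (hb α))
    by_cases hSne : S.Nonempty
    · obtain ⟨β1, hβ1S, hβ1min'⟩ :=
        hSclosed.isCompact.exists_isMinOn hSne (hcont α u).continuousOn
      have hβ1min : ∀ β2 ∈ S, (inner ℝ (b α β1) u : ℝ) - f α β1 ≤ (inner ℝ (b α β2) u : ℝ) - f α β2 :=
        isMinOn_iff.mp hβ1min'
      have hβ1K : β1 ∉ K := by
        intro hmem
        have h0 : Metric.infDist (b α β1) J = 0 :=
          Metric.infDist_zero_of_mem ⟨β1, hmem, rfl⟩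
        have : ε ≤ (0:ℝ) := h0 ▸ hβ1S
        linarith
      have hclt : (inner ℝ (b α β0) u : ℝ) - f α β0 < (inner ℝ (b α β1) u : ℝ) - f α β1 := by
        rcases lt_or_eq_of_le (hβ0 β1) with h | h
        · exact h
        · exact absurd (le_of_eq h.symm) hβ1K
      set c : ℝ := ((inner ℝ (b α β1) u : ℝ) - f α β1) - ((inner ℝ (b α β0) u : ℝ) - f α β0)
        with hcdef
      have hcpos : 0 < c := by simp only [hcdef]; linarith
      refine ⟨c / (3 * M), by positivity, ?_⟩
      intro s hs β' hβ'
      apply extract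
      by_contra hge
      push_neg at hge
      have hβ'S : β' ∈ S := by simp only [hS, Set.mem_setOf_eq]; exact hge
      have h1 : (inner ℝ (b α β1) u : ℝ) - f α β1 ≤ (inner ℝ (b α β') u : ℝ) - f α β' :=
        hβ1min β' hβ'S
      have h2 : (inner ℝ (b α β') (u+s) : ℝ) - f α β' ≤
          (inner ℝ (b α β0) (u+s) : ℝ) - f α β0 := hβ' β0
      have e1 : (inner ℝ (b α β') (u+s) : ℝ) =
          (inner ℝ (b α β') u : ℝ) + (inner ℝ (b α β') s : ℝ) := inner_add_right _ _ _
      have e2 : (inner ℝ (b α β0) (u+s) : ℝ) =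
          (inner ℝ (b α β0) u : ℝ) + (inner ℝ (b α β0) s : ℝ) := inner_add_right _ _ _
      rw [e1, e2] at h2
      have h3 : (inner ℝ (b α β0) s : ℝ) ≤ M * ‖s‖ :=
        le_trans (real_inner_le_norm _ _)
          (mul_le_mul_of_nonneg_right (hM α β0) (norm_nonneg s))
      have habs : |(inner ℝ (b α β') s : ℝ)| ≤ M * ‖s‖ :=
        le_trans (abs_real_inner_le_norm _ _)
          (mul_le_mul_of_nonneg_right (hM α β') (norm_nonneg s))
      have h4 : -(M * ‖s‖) ≤ (inner ℝ (b α β') s : ℝ) := by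
        have := neg_abs_le ((inner ℝ (b α β') s : ℝ))
        linarith
      have h6 : M * ‖s‖ ≤ c / 3 := by
        have h7 := mul_le_mul_of_nonneg_left hs hMpos.le
        have h8 : M * (c / (3 * M)) = c / 3 := by field_simp
        linarith
      linarith
    · refine ⟨1, one_pos, ?_⟩
      intro s hs β' hβ'
      apply extract
      by_contra hge
      push_neg at hge
      exact hSne ⟨β', hge⟩
  -- force: a maximizer at u+s (small s) is a maximizer at u
  have force : ∀ α : A, ∃ d : ℝ, 0 < d ∧ ∀ s : EuclideanSpace ℝ (Fin m), ‖s‖ ≤ d →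
      (⨅ β : B, ((inner ℝ (b α β) (u+s) : ℝ) - f α β)) =
        (⨆ α' : A, ⨅ β : B, ((inner ℝ (b α' β) (u+s) : ℝ) - f α' β)) →
      (⨅ β : B, ((inner ℝ (b α β) u : ℝ) - f α β)) =
        (⨆ α' : A, ⨅ β : B, ((inner ℝ (b α' β) u : ℝ) - f α' β)) := by
    intro α
    by_cases hα : (⨅ β : B, ((inner ℝ (b α β) u : ℝ) - f α β)) =
        (⨆ α' : A, ⨅ β : B, ((inner ℝ (b α' β) u : ℝ) - f α' β))
    · exact ⟨1, one_pos, fun _ _ _ => hα⟩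
    · have hle : (⨅ β : B, ((inner ℝ (b α β) u : ℝ) - f α β)) ≤
          (⨆ α' : A, ⨅ β : B, ((inner ℝ (b α' β) u : ℝ) - f α' β)) :=
        le_ciSup (f := fun α' : A => ⨅ β : B, ((inner ℝ (b α' β) u : ℝ) - f α' β))
          (Set.finite_range _).bddAbove α
      have hlt := lt_of_le_of_ne hle hα
      set c : ℝ := (⨆ α' : A, ⨅ β : B, ((inner ℝ (b α' β) u : ℝ) - f α' β)) -
        (⨅ β : B, ((inner ℝ (b α β) u : ℝ) - f α β)) with hcdef
      have hcpos : 0 < c := by simp only [hcdef]; linarith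
      refine ⟨c / (3 * M), by positivity, ?_⟩
      intro s hs heq
      exfalso
      obtain ⟨αm, hαm_max, hαm_eq⟩ := hsup_att u
      have hA : (⨅ β : B, ((inner ℝ (b αm β) (u+s) : ℝ) - f αm β)) ≤
          (⨆ α' : A, ⨅ β : B, ((inner ℝ (b α' β) (u+s) : ℝ) - f α' β)) :=
        le_ciSup (f := fun α' : A => ⨅ β : B, ((inner ℝ (b α' β) (u+s) : ℝ) - f α' β))
          (Set.finite_range _).bddAbove αm
      have hB0 := hLip αm (u+s) (-s)
      rw [add_neg_cancel_right, norm_neg] at hB0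
      have hC := hLip α u s
      have h6 : M * ‖s‖ ≤ c / 3 := by
        have h7 := mul_le_mul_of_nonneg_left hs hMpos.le
        have h8 : M * (c / (3 * M)) = c / 3 := by field_simp
        linarith
      -- G u = g αm u ≤ g αm (u+s) + M‖s‖ ≤ G(u+s) + M‖s‖ = g α (u+s) + M‖s‖
      --     ≤ g α u + 2 M ‖s‖ = G u - c + 2 M ‖s‖
      rw [hαm_eq] at hcdef
      linarith [hcdef.ge, hcdef.le]
  choose d1 hd1pos hd1 using key
  choose d2 hd2pos hd2 using force
  set δ : ℝ := Finset.univ.inf' Finset.univ_nonempty (fun α : A => min (d1 α) (d2 α)) with hδ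
  have hδpos : 0 < δ := by
    rw [hδ, Finset.lt_inf'_iff]
    exact fun α _ => lt_min (hd1pos α) (hd2pos α)
  refine ⟨δ, hδpos, ?_⟩
  intro s hs0 hsδ αs hαs βs hβs
  have hδ1 : ‖s‖ ≤ d1 αs :=
    hsδ.trans ((Finset.inf'_le _ (Finset.mem_univ αs)).trans (min_le_left _ _))
  have hδ2 : ‖s‖ ≤ d2 αs :=
    hsδ.trans ((Finset.inf'_le _ (Finset.mem_univ αs)).trans (min_le_right _ _))
  rw [hG] at hαs
  rw [hG, hG]
  have hαsu := hd2 αs s hδ2 hαs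
  obtain ⟨β1, hβ1, hβ1e⟩ := hmin αs (u+s)
  have hval : (⨅ β : B, ((inner ℝ (b αs β) (u+s) : ℝ) - f αs β)) =
      (inner ℝ (b αs βs) (u+s) : ℝ) - f αs βs := by
    rw [hβ1e]; exact le_antisymm (hβ1 βs) (hβs β1)
  obtain ⟨β0, hβ0, hβ0e⟩ := hmin αs u
  have einner : (inner ℝ (b αs βs) (u+s) : ℝ) =
      (inner ℝ (b αs βs) u : ℝ) + (inner ℝ (b αs βs) s : ℝ) := inner_add_right _ _ _
  have hlow0 : (⨅ β : B, ((inner ℝ (b αs β) u : ℝ) - f αs β)) ≤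
      (inner ℝ (b αs βs) u : ℝ) - f αs βs := by
    rw [hβ0e]; exact hβ0 βs
  obtain ⟨β, hβmin, hβnorm⟩ := hd1 αs s hδ1 βs hβs
  have hup1 : (inner ℝ (b αs βs) (u+s) : ℝ) - f αs βs ≤
      (inner ℝ (b αs β) (u+s) : ℝ) - f αs β := hβs β
  have e2 : (inner ℝ (b αs β) (u+s) : ℝ) =
      (inner ℝ (b αs β) u : ℝ) + (inner ℝ (b αs β) s : ℝ) := inner_add_right _ _ _
  have hβval : (inner ℝ (b αs β) u : ℝ) - f αs β =
      (⨅ β : B, ((inner ℝ (b αs β) u : ℝ) - f αs β)) := by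
    rw [hβ0e]; exact le_antisymm (hβmin β0) (hβ0 β)
  have hdiff : (inner ℝ (b αs β) s : ℝ) - (inner ℝ (b αs βs) s : ℝ) ≤ ε * ‖s‖ := by
    have hsub : (inner ℝ (b αs β) s : ℝ) - (inner ℝ (b αs βs) s : ℝ) =
        (inner ℝ (b αs β - b αs βs) s : ℝ) := (inner_sub_left _ _ _).symm
    rw [hsub]
    refine le_trans (real_inner_le_norm _ _) ?_
    rw [norm_sub_rev]
    exact mul_le_mul_of_nonneg_right hβnorm (norm_nonneg s)
  have hεs : 0 ≤ ε * ‖s‖ := mul_nonneg hε.le (norm_nonneg s)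
  rw [abs_le]
  constructor
  · linarith [hαs.ge, hαsu.le, hval.le, hlow0, einner.le]
  · linarith [hαs.le, hαsu.ge, hval.ge, hup1, e2.le, hβval.le, hdiff]
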